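/- Let G = (V, E, f) be a d-featured graph, L ≥ 0, c ≥ 1, and let n : V → ℕ be an enumeration for G. Then there exists a graph Ĝ = (V, Ê, f) over the same vertices and features such that for all u, v, w ∈ V: (1) G, v ∼^{L,c,*}_∃ Ĝ, v; (2) if v and u have the same ∼^{L,c}-type in G, then (v, w) ∈ Ê iff (u, w) ∈ Ê; (3) if (v, w) ∈ Ê, then for every w′ ∈ V with the same ∼^{L,c}-type in G as w and n(w′) < n(w), also (v, w′) ∈ Ê; and (4) if (v, w) ∈ Ê and n(w) ≥ c, then (v, w′) ∈ Ê for every w′ ∈ V with the same ∼^{L,c}-type in G as w. -/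

import Mathlib

/-- A `d`-featured directed graph: finite nonempty vertex set, edge relation,
and a feature map into `{0,1}^d` (represented as `Fin d → Bool`). -/
structure FGraph (d : ℕ) where
  V : Type
  [fintypeV : Fintype V]
  nonemptyV : Nonempty V
  E : V → V → Prop
  f : V → Fin d → Bool

attribute [instance] FGraph.fintypeV

/-- `c`-graded `L`-turn bisimilarity between pointed `d`-featured graphs. -/
def bisim (d c : ℕ) : (L : ℕ) → (G₁ G₂ : FGraph d) → G₁.V → G₂.V → Prop
  | 0, G₁, G₂, v₁, v₂ => G₁.f v₁ = G₂.f v₂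
  | L + 1, G₁, G₂, v₁, v₂ =>
      G₁.f v₁ = G₂.f v₂ ∧
      (∀ k, k ≤ c → ∀ u₁ : Fin k → G₁.V, Function.Injective u₁ →
        (∀ i, G₁.E v₁ (u₁ i)) →
        ∃ u₂ : Fin k → G₂.V, Function.Injective u₂ ∧ (∀ i, G₂.E v₂ (u₂ i)) ∧
          ∀ i, bisim d c L G₁ G₂ (u₁ i) (u₂ i)) ∧
      (∀ k, k ≤ c → ∀ u₂ : Fin k → G₂.V, Function.Injective u₂ →
        (∀ i, G₂.E v₂ (u₂ i)) →
        ∃ u₁ : Fin k → G₁.V, Function.Injective u₁ ∧ (∀ i, G₁.E v₁ (u₁ i)) ∧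
          ∀ i, bisim d c L G₁ G₂ (u₁ i) (u₂ i))

/-- `∼^{L,c,*}_∃` : `c`-graded `L`-turn bisimilarity with (unbounded) global counting. -/
def bisimStar (d c L : ℕ) (G₁ G₂ : FGraph d) (v₁ : G₁.V) (v₂ : G₂.V) : Prop :=
  bisim d c L G₁ G₂ v₁ v₂ ∧
  (∀ u : G₁.V,
    Set.ncard {u₁ : G₁.V | bisim d c L G₁ G₁ u₁ u} =
      Set.ncard {u₂ : G₂.V | bisim d c L G₂ G₁ u₂ u}) ∧
  (∀ u : G₂.V,
    Set.ncard {u₁ : G₁.V | bisim d c L G₁ G₂ u₁ u} =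
      Set.ncard {u₂ : G₂.V | bisim d c L G₂ G₂ u₂ u})

/-- `∼^{L,c,q}_∃` : `c`-graded `L`-turn bisimilarity with global counting bounded by `q`. -/
def bisimQ (d c L q : ℕ) (G₁ G₂ : FGraph d) (v₁ : G₁.V) (v₂ : G₂.V) : Prop :=
  bisim d c L G₁ G₂ v₁ v₂ ∧
  (∀ u : G₁.V,
    min (Set.ncard {u₁ : G₁.V | bisim d c L G₁ G₁ u₁ u}) q =
      min (Set.ncard {u₂ : G₂.V | bisim d c L G₂ G₁ u₂ u}) q) ∧
  (∀ u : G₂.V,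
    min (Set.ncard {u₁ : G₁.V | bisim d c L G₁ G₂ u₁ u}) q =
      min (Set.ncard {u₂ : G₂.V | bisim d c L G₂ G₂ u₂ u}) q)
/-- Two vertices of `G` have the same `∼^{L,c}`-type iff exactly the same pointed
graphs are `∼^{L,c}`-bisimilar to them. -/
def sameType (d c L : ℕ) (G : FGraph d) (u w : G.V) : Prop :=
  ∀ (H : FGraph d) (x : H.V), bisim d c L G H u x ↔ bisim d c L G H w x

/-- An enumeration for `G`: a map `n : V → ℕ` restricting, on each
`∼^{L,c}`-type class, to a bijection onto `{1, …, size of the class}`. -/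
def IsEnum (d c L : ℕ) (G : FGraph d) (n : G.V → ℕ) : Prop :=
  ∀ w : G.V,
    Set.BijOn n {u : G.V | sameType d c L G u w}
      (Set.Icc 1 (Set.ncard {u : G.V | sameType d c L G u w}))
open Classical

lemma bisim_refl (d c : ℕ) : ∀ (L : ℕ) (G : FGraph d) (v : G.V), bisim d c L G G v v
  | 0, _, _ => rfl
  | L + 1, G, v =>
      ⟨rfl,
        fun _ _ u hu hE => ⟨u, hu, hE, fun i => bisim_refl d c L G (u i)⟩,
        fun _ _ u hu hE => ⟨u, hu, hE, fun i => bisim_refl d c L G (u i)⟩⟩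

lemma bisim_symm (d c : ℕ) : ∀ (L : ℕ) {G₁ G₂ : FGraph d} {v₁ : G₁.V} {v₂ : G₂.V},
    bisim d c L G₁ G₂ v₁ v₂ → bisim d c L G₂ G₁ v₂ v₁
  | 0, _, _, _, _, h => h.symm
  | L + 1, G₁, G₂, v₁, v₂, ⟨hf, hforth, hback⟩ =>
      ⟨hf.symm,
        fun k hk u hu hE =>
          let ⟨u', h1, h2, h3⟩ := hback k hk u hu hE
          ⟨u', h1, h2, fun i => bisim_symm d c L (h3 i)⟩,
        fun k hk u hu hE =>
          let ⟨u', h1, h2, h3⟩ := hforth k hk u hu hE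
          ⟨u', h1, h2, fun i => bisim_symm d c L (h3 i)⟩⟩

lemma bisim_trans (d c : ℕ) : ∀ (L : ℕ) {G₁ G₂ G₃ : FGraph d} {v₁ : G₁.V} {v₂ : G₂.V} {v₃ : G₃.V},
    bisim d c L G₁ G₂ v₁ v₂ → bisim d c L G₂ G₃ v₂ v₃ → bisim d c L G₁ G₃ v₁ v₃
  | 0, _, _, _, _, _, _, h, h' => h.trans h'
  | L + 1, G₁, G₂, G₃, v₁, v₂, v₃, ⟨hf, hforth, hback⟩, ⟨hf', hforth', hback'⟩ =>
      ⟨hf.trans hf',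
        fun k hk u hu hE =>
          let ⟨u', h1, h2, h3⟩ := hforth k hk u hu hE
          let ⟨u'', h1', h2', h3'⟩ := hforth' k hk u' h1 h2
          ⟨u'', h1', h2', fun i => bisim_trans d c L (h3 i) (h3' i)⟩,
        fun k hk u hu hE =>
          let ⟨u', h1, h2, h3⟩ := hback' k hk u hu hE
          let ⟨u'', h1', h2', h3'⟩ := hback k hk u' h1 h2
          ⟨u'', h1', h2', fun i => bisim_trans d c L (h3' i) (h3 i)⟩⟩

lemma bisim_mono (d c : ℕ) : ∀ (L ℓ : ℕ), ℓ ≤ L → ∀ {G₁ G₂ : FGraph d} {v₁ : G₁.V} {v₂ : G₂.V},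
    bisim d c L G₁ G₂ v₁ v₂ → bisim d c ℓ G₁ G₂ v₁ v₂ := by
  intro L
  induction L with
  | zero =>
    intro ℓ hℓ
    obtain rfl : ℓ = 0 := Nat.le_zero.mp hℓ
    exact fun h => h
  | succ L ih =>
    intro ℓ hℓ G₁ G₂ v₁ v₂ h
    match ℓ, hℓ with
    | 0, _ => exact h.1
    | ℓ + 1, hℓ =>
      obtain ⟨hf, hforth, hback⟩ := h
      refine ⟨hf, ?_, ?_⟩
      · intro k hk u hu hE
        obtain ⟨u', h1, h2, h3⟩ := hforth k hk u hu hE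
        exact ⟨u', h1, h2, fun i => ih ℓ (Nat.succ_le_succ_iff.mp hℓ) (h3 i)⟩
      · intro k hk u hu hE
        obtain ⟨u', h1, h2, h3⟩ := hback k hk u hu hE
        exact ⟨u', h1, h2, fun i => ih ℓ (Nat.succ_le_succ_iff.mp hℓ) (h3 i)⟩

lemma sameType_iff (d c L : ℕ) (G : FGraph d) (u w : G.V) :
    sameType d c L G u w ↔ bisim d c L G G u w := by
  constructor
  · intro h
    exact (h G w).mpr (bisim_refl d c L G w)
  · intro h H x
    exact ⟨fun h' => bisim_trans d c L (bisim_symm d c L h) h',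
           fun h' => bisim_trans d c L h h'⟩
variable {d : ℕ}

/-- The `∼^{L,c}`-class of `x` in `G`. -/
def clsS (d c L : ℕ) (G : FGraph d) (x : G.V) : Set G.V := {y : G.V | bisim d c L G G y x}

lemma mem_clsS_self (d c L : ℕ) (G : FGraph d) (x : G.V) : x ∈ clsS d c L G x :=
  bisim_refl d c L G x

lemma clsS_eq (d c L : ℕ) (G : FGraph d) {x x' : G.V} (h : bisim d c L G G x x') :
    clsS d c L G x = clsS d c L G x' := by
  ext y
  exact ⟨fun h' => bisim_trans d c L h' h, fun h' => bisim_trans d c L h' (bisim_symm d c L h)⟩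

lemma setOf_sameType_eq (d c L : ℕ) (G : FGraph d) (x : G.V) :
    {u : G.V | sameType d c L G u x} = clsS d c L G x := by
  ext y; exact sameType_iff d c L G y x

/-- number of `G`-out-neighbours of `v` in the class of `x`. -/
noncomputable def degF (d c L : ℕ) (G : FGraph d) (v x : G.V) : ℕ :=
  Set.ncard {y : G.V | G.E v y ∧ bisim d c L G G y x}

noncomputable def capF (d c L : ℕ) (G : FGraph d) (v x : G.V) : ℕ :=
  if degF d c L G v x < c then degF d c L G v x else (clsS d c L G x).ncard

lemma degF_eq (d c L : ℕ) (G : FGraph d) (v : G.V) {x x' : G.V}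
    (h : bisim d c L G G x x') : degF d c L G v x = degF d c L G v x' := by
  unfold degF
  congr 1
  ext y
  have := Set.ext_iff.mp (clsS_eq d c L G h) y
  exact and_congr_right fun _ => this

lemma capF_eq (d c L : ℕ) (G : FGraph d) (v : G.V) {x x' : G.V}
    (h : bisim d c L G G x x') : capF d c L G v x = capF d c L G v x' := by
  unfold capF
  rw [degF_eq d c L G v h, clsS_eq d c L G h]

lemma degF_le_cls (d c L : ℕ) (G : FGraph d) (v x : G.V) :
    degF d c L G v x ≤ (clsS d c L G x).ncard :=
  Set.ncard_le_ncard (fun y hy => hy.2) (Set.toFinite _)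

/-- representative of the class of `v`. -/
noncomputable def repF (d c L : ℕ) (G : FGraph d) (v : G.V) : G.V :=
  Quotient.out (s := ⟨fun a b => bisim d c L G G a b,
    ⟨fun a => bisim_refl d c L G a, fun h => bisim_symm d c L h,
     fun h h' => bisim_trans d c L h h'⟩⟩) (Quotient.mk _ v)

lemma repF_bisim (d c L : ℕ) (G : FGraph d) (v : G.V) :
    bisim d c L G G (repF d c L G v) v :=
  Quotient.mk_out (s := ⟨fun a b => bisim d c L G G a b,
    ⟨fun a => bisim_refl d c L G a, fun h => bisim_symm d c L h,
     fun h h' => bisim_trans d c L h h'⟩⟩) v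

lemma repF_eq (d c L : ℕ) (G : FGraph d) {v v' : G.V} (h : bisim d c L G G v v') :
    repF d c L G v = repF d c L G v' := by
  unfold repF
  congr 1
  exact Quotient.sound h
lemma enum_bijOn (d c L : ℕ) (G : FGraph d) (n : G.V → ℕ) (hn : IsEnum d c L G n) (x : G.V) :
    Set.BijOn n (clsS d c L G x) (Set.Icc 1 ((clsS d c L G x).ncard)) := by
  have := hn x
  rwa [setOf_sameType_eq d c L G x] at this

lemma ncard_Icc_one (m : ℕ) : (Set.Icc 1 m).ncard = m := by
  rw [← Finset.coe_Icc, Set.ncard_coe_finset, Nat.card_Icc]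
  omega

/-- cardinality of a "prefix" of a class along the enumeration. -/
lemma ncard_cls_le (d c L : ℕ) (G : FGraph d) (n : G.V → ℕ) (hn : IsEnum d c L G n)
    (x : G.V) (t : ℕ) :
    ({y : G.V | bisim d c L G G y x ∧ n y ≤ t}).ncard
      = min t ((clsS d c L G x).ncard) := by
  have hb := enum_bijOn d c L G n hn x
  set m := (clsS d c L G x).ncard with hm
  have hinj : Set.InjOn n {y : G.V | bisim d c L G G y x ∧ n y ≤ t} :=
    hb.injOn.mono (fun y hy => hy.1)
  have himg : n '' {y : G.V | bisim d c L G G y x ∧ n y ≤ t} = Set.Icc 1 (min t m) := by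
    ext a
    constructor
    · rintro ⟨y, ⟨hy1, hy2⟩, rfl⟩
      have := hb.mapsTo hy1
      simp only [Set.mem_Icc] at this ⊢
      omega
    · intro ha
      simp only [Set.mem_Icc] at ha
      obtain ⟨y, hy, rfl⟩ := hb.surjOn (by simp only [Set.mem_Icc]; omega : a ∈ Set.Icc 1 m)
      exact ⟨y, ⟨hy, by omega⟩, rfl⟩
  calc ({y : G.V | bisim d c L G G y x ∧ n y ≤ t}).ncard
      = (n '' {y : G.V | bisim d c L G G y x ∧ n y ≤ t}).ncard :=
        (Set.ncard_image_of_injOn hinj).symm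
    _ = min t m := by rw [himg, ncard_Icc_one]

lemma n_self_le (d c L : ℕ) (G : FGraph d) (n : G.V → ℕ) (hn : IsEnum d c L G n) (x : G.V) :
    1 ≤ n x ∧ n x ≤ (clsS d c L G x).ncard := by
  have := (enum_bijOn d c L G n hn x).mapsTo (mem_clsS_self d c L G x)
  simpa using this
lemma glue (d c L : ℕ) (G : FGraph d) {k : ℕ} (p : Fin k → G.V) (hp : Function.Injective p)
    (A : G.V → Finset G.V)
    (hAc : ∀ x y : G.V, bisim d c L G G x y → A x = A y)
    (hAsub : ∀ (x : G.V), ∀ a ∈ A x, bisim d c L G G a x)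
    (hcard : ∀ x : G.V,
      (Finset.univ.filter (fun j : Fin k => bisim d c L G G (p j) x)).card ≤ (A x).card) :
    ∃ q : Fin k → G.V, Function.Injective q ∧ ∀ i, q i ∈ A (p i) := by
  classical
  letI : LinearOrder G.V := LinearOrder.lift' (fun v => ((Fintype.equivFin G.V) v : ℕ))
    (fun a b h => (Fintype.equivFin G.V).injective (Fin.val_injective h))
  haveI : Inhabited G.V := Classical.inhabited_of_nonempty G.nonemptyV
  set r : Fin k → ℕ := fun i =>
    (Finset.univ.filter (fun j : Fin k => bisim d c L G G (p j) (p i) ∧ p j ≤ p i)).card with hr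
  have hr1 : ∀ i, 1 ≤ r i := by
    intro i
    apply Finset.card_pos.mpr
    exact ⟨i, by simp [bisim_refl]⟩
  have hrle : ∀ i, r i ≤ (A (p i)).card := by
    intro i
    refine le_trans (Finset.card_le_card ?_) (hcard (p i))
    intro j hj
    simp only [Finset.mem_filter, Finset.mem_univ, true_and] at hj ⊢
    exact hj.1
  set q : Fin k → G.V := fun i =>
    ((A (p i)).sort (· ≤ ·)).getD (r i - 1) default with hq
  have hlen : ∀ i, r i - 1 < ((A (p i)).sort (· ≤ ·)).length := by
    intro i
    rw [Finset.length_sort]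
    have := hr1 i
    have := hrle i
    omega
  have hget : ∀ i, q i = ((A (p i)).sort (· ≤ ·)).get ⟨r i - 1, hlen i⟩ := by
    intro i
    rw [hq]
    exact List.getD_eq_get _ _ ⟨r i - 1, hlen i⟩
  have hmem : ∀ i, q i ∈ A (p i) := by
    intro i
    rw [hget i]
    exact (Finset.mem_sort _).mp (List.get_mem _ _)
  refine ⟨q, ?_, hmem⟩
  intro i j hij
  have hbij : bisim d c L G G (p i) (p j) := by
    have h1 := hAsub (p i) (q i) (hmem i)
    have h2 := hAsub (p j) (q j) (hmem j)
    rw [hij] at h1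
    exact bisim_trans d c L (bisim_symm d c L h1) h2
  have hA : A (p i) = A (p j) := hAc _ _ hbij
  have hrij : r i = r j := by
    have hgj : q j = ((A (p i)).sort (· ≤ ·)).get ⟨r j - 1, by rw [hA]; exact hlen j⟩ := by
      have hq' : q j = ((A (p i)).sort (· ≤ ·)).getD (r j - 1) default := by
        rw [hq]; simp only; rw [hA]
      rw [hq']
      exact List.getD_eq_get _ _ ⟨r j - 1, by rw [hA]; exact hlen j⟩
    have heq : ((A (p i)).sort (· ≤ ·)).get ⟨r i - 1, hlen i⟩
        = ((A (p i)).sort (· ≤ ·)).get ⟨r j - 1, by rw [hA]; exact hlen j⟩ := by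
      rw [← hget i, ← hgj, hij]
    have hnd : (((A (p i)).sort (· ≤ ·))).Nodup := Finset.sort_nodup _ _
    have := (List.Nodup.get_inj_iff hnd).mp heq
    have h' : r i - 1 = r j - 1 := congrArg Fin.val this
    have := hr1 i
    have := hr1 j
    omega
  have hpij : p i = p j := by
    rcases le_total (p i) (p j) with h | h
    · refine le_antisymm h ?_
      have hsub : (Finset.univ.filter (fun j' : Fin k => bisim d c L G G (p j') (p i) ∧ p j' ≤ p i))
          ⊆ (Finset.univ.filter (fun j' : Fin k => bisim d c L G G (p j') (p j) ∧ p j' ≤ p j)) := by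
        intro j' hj'
        simp only [Finset.mem_filter, Finset.mem_univ, true_and] at hj' ⊢
        exact ⟨bisim_trans d c L hj'.1 hbij, le_trans hj'.2 h⟩
      have hseq := Finset.eq_of_subset_of_card_le hsub (le_of_eq hrij.symm)
      have : j ∈ (Finset.univ.filter (fun j' : Fin k => bisim d c L G G (p j') (p i) ∧ p j' ≤ p i)) := by
        rw [hseq]
        simp [bisim_refl]
      simpa using (Finset.mem_filter.mp this).2.2
    · refine le_antisymm ?_ h
      have hsub : (Finset.univ.filter (fun j' : Fin k => bisim d c L G G (p j') (p j) ∧ p j' ≤ p j))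
          ⊆ (Finset.univ.filter (fun j' : Fin k => bisim d c L G G (p j') (p i) ∧ p j' ≤ p i)) := by
        intro j' hj'
        simp only [Finset.mem_filter, Finset.mem_univ, true_and] at hj' ⊢
        exact ⟨bisim_trans d c L hj'.1 (bisim_symm d c L hbij), le_trans hj'.2 h⟩
      have hseq := Finset.eq_of_subset_of_card_le hsub (le_of_eq hrij)
      have : i ∈ (Finset.univ.filter (fun j' : Fin k => bisim d c L G G (p j') (p j) ∧ p j' ≤ p j)) := by
        rw [hseq]
        simp [bisim_refl]
      simpa using (Finset.mem_filter.mp this).2.2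
  exact hp hpij
lemma degF_le_capF (d c L : ℕ) (G : FGraph d) (v x : G.V) :
    degF d c L G v x ≤ capF d c L G v x := by
  unfold capF
  split
  · exact le_rfl
  · exact degF_le_cls d c L G v x

lemma capF_of_lt {d c L : ℕ} {G : FGraph d} {v x : G.V} (h : degF d c L G v x < c) :
    capF d c L G v x = degF d c L G v x := if_pos h

lemma capF_of_ge {d c L : ℕ} {G : FGraph d} {v x : G.V} (h : ¬ degF d c L G v x < c) :
    capF d c L G v x = (clsS d c L G x).ncard := if_neg h

lemma mainBisim (d c L : ℕ) (hc : 1 ≤ c) (G : FGraph d) (n : G.V → ℕ)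
    (hn : IsEnum d c L G n) :
    ∀ ℓ, ℓ ≤ L → ∀ a b : G.V, bisim d c ℓ G G a b →
      bisim d c ℓ G { G with E := fun v w => n w ≤ capF d c L G (repF d c L G v) w } a b := by
  intro ℓ
  induction ℓ with
  | zero => intro _ a b h; exact h
  | succ ℓ ih =>
    intro hℓ a b h
    have hℓL : ℓ ≤ L := Nat.le_of_succ_le hℓ
    set Gh : FGraph d := { G with E := fun v w => n w ≤ capF d c L G (repF d c L G v) w }
      with hGh
    set r : G.V := repF d c L G b with hrdef
    have hrb : bisim d c L G G r b := repF_bisim d c L G b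
    have har : bisim d c (ℓ+1) G G a r :=
      bisim_trans d c (ℓ+1) h (bisim_symm d c (ℓ+1) (bisim_mono d c L (ℓ+1) hℓ hrb))
    refine ⟨h.1, ?_, ?_⟩
    · -- forth
      intro k hk u hu hE
      obtain ⟨w, hwinj, hwE, hwbis⟩ := har.2.1 k hk u hu hE
      obtain ⟨q, hqinj, hqmem⟩ := glue d c L G w hwinj
        (fun x => (Set.toFinite
          {y : G.V | bisim d c L G G y x ∧ n y ≤ capF d c L G r x}).toFinset)
        (by
          intro x y hxy
          rw [Set.Finite.toFinset_inj]
          ext z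
          have h1 : bisim d c L G G z x ↔ bisim d c L G G z y :=
            ⟨fun h' => bisim_trans d c L h' hxy,
             fun h' => bisim_trans d c L h' (bisim_symm d c L hxy)⟩
          have h2 := capF_eq d c L G r hxy
          simp only [Set.mem_setOf_eq, h1, h2])
        (by
          intro x a' ha'
          exact ((Set.Finite.mem_toFinset _).mp ha').1)
        (by
          intro x
          rw [← Set.ncard_eq_toFinset_card _ (Set.toFinite _), ncard_cls_le d c L G n hn]
          have hdeg : (Finset.univ.filter
              (fun j : Fin k => bisim d c L G G (w j) x)).card ≤ degF d c L G r x := by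
            rw [degF, Set.ncard_eq_toFinset_card _ (Set.toFinite _)]
            apply Finset.card_le_card_of_injOn w
            · intro j hj
              rw [Finset.mem_coe, Set.Finite.mem_toFinset]
              simp only [Finset.mem_coe, Finset.mem_filter, Finset.mem_univ, true_and] at hj
              exact ⟨hwE j, hj⟩
            · exact Function.Injective.injOn hwinj
          exact le_min (le_trans hdeg (degF_le_capF d c L G r x))
            (le_trans hdeg (degF_le_cls d c L G r x)))
      have hqprop : ∀ i, bisim d c L G G (q i) (w i) ∧ n (q i) ≤ capF d c L G r (w i) := by
        intro i
        have := hqmem i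
        rwa [Set.Finite.mem_toFinset] at this
      refine ⟨q, hqinj, ?_, ?_⟩
      · intro i
        show n (q i) ≤ capF d c L G (repF d c L G b) (q i)
        rw [← hrdef, capF_eq d c L G r (hqprop i).1]
        exact (hqprop i).2
      · intro i
        refine ih hℓL (u i) (q i) ?_
        exact bisim_trans d c ℓ (hwbis i)
          (bisim_mono d c L ℓ hℓL (bisim_symm d c L (hqprop i).1))
    · -- back
      intro k hk z hz hzE
      have hzE' : ∀ i, n (z i) ≤ capF d c L G r (z i) := fun i => hzE i
      obtain ⟨w, hwinj, hwmem⟩ := glue d c L G z hz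
        (fun x => (Set.toFinite
          {y : G.V | G.E r y ∧ bisim d c L G G y x}).toFinset)
        (by
          intro x y hxy
          rw [Set.Finite.toFinset_inj]
          ext a'
          have h1 : bisim d c L G G a' x ↔ bisim d c L G G a' y :=
            ⟨fun h' => bisim_trans d c L h' hxy,
             fun h' => bisim_trans d c L h' (bisim_symm d c L hxy)⟩
          simp only [Set.mem_setOf_eq, h1])
        (by
          intro x a' ha'
          exact ((Set.Finite.mem_toFinset _).mp ha').2)
        (by
          intro x
          rw [← Set.ncard_eq_toFinset_card _ (Set.toFinite _)]
          show _ ≤ degF d c L G r x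
          by_cases hdc : degF d c L G r x < c
          · have hsub : (Finset.univ.filter
                (fun j : Fin k => bisim d c L G G (z j) x)).card
                ≤ ({y : G.V | bisim d c L G G y x ∧ n y ≤ degF d c L G r x}).ncard := by
              rw [Set.ncard_eq_toFinset_card _ (Set.toFinite _)]
              apply Finset.card_le_card_of_injOn z
              · intro j hj
                rw [Finset.mem_coe, Set.Finite.mem_toFinset]
                simp only [Finset.mem_coe, Finset.mem_filter, Finset.mem_univ, true_and] at hj
                refine ⟨hj, ?_⟩
                have := hzE' j
                rwa [capF_eq d c L G r hj, capF_of_lt hdc] at this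
              · exact Function.Injective.injOn hz
            rw [ncard_cls_le d c L G n hn,
              min_eq_left (degF_le_cls d c L G r x)] at hsub
            exact hsub
          · calc (Finset.univ.filter (fun j : Fin k => bisim d c L G G (z j) x)).card
                ≤ Finset.univ.card := Finset.card_filter_le _ _
              _ = k := by rw [Finset.card_univ, Fintype.card_fin]
              _ ≤ c := hk
              _ ≤ degF d c L G r x := le_of_not_gt hdc)
      have hwprop : ∀ i, G.E r (w i) ∧ bisim d c L G G (w i) (z i) := by
        intro i
        have := hwmem i
        rwa [Set.Finite.mem_toFinset] at this
      obtain ⟨u, huinj, huE, hubis⟩ := har.2.2 k hk w hwinj (fun i => (hwprop i).1)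
      refine ⟨u, huinj, huE, ?_⟩
      intro i
      refine ih hℓL (u i) (z i) ?_
      exact bisim_trans d c ℓ (hubis i) (bisim_mono d c L ℓ hℓL (hwprop i).2)
theorem stmt11' (d c L : ℕ) (hc : 1 ≤ c) (G : FGraph d) (n : G.V → ℕ)
    (hn : IsEnum d c L G n) :
    ∃ E' : G.V → G.V → Prop,
      (∀ v : G.V, bisimStar d c L G { G with E := E' } v v) ∧
      (∀ v u w : G.V, sameType d c L G v u → (E' v w ↔ E' u w)) ∧
      (∀ v w w' : G.V, E' v w → sameType d c L G w' w → n w' < n w → E' v w') ∧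
      (∀ v w w' : G.V, E' v w → c ≤ n w → sameType d c L G w' w → E' v w') := by
  classical
  refine ⟨fun v w => n w ≤ capF d c L G (repF d c L G v) w, ?_, ?_, ?_, ?_⟩
  · -- (1) bisimStar
    intro v
    set Gh : FGraph d := { G with E := fun v w => n w ≤ capF d c L G (repF d c L G v) w }
      with hGh
    have hb : ∀ y : G.V, bisim d c L G Gh y y :=
      fun y => mainBisim d c L hc G n hn L le_rfl y y (bisim_refl d c L G y)
    refine ⟨hb v, ?_, ?_⟩
    · intro u
      congr 1
      ext y
      constructor
      · intro h'
        exact bisim_trans d c L (bisim_symm d c L (hb y)) h'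
      · intro h'
        exact bisim_trans d c L (hb y) h'
    · intro u
      congr 1
      ext y
      constructor
      · intro h'
        exact bisim_trans d c L (bisim_symm d c L (hb y)) h'
      · intro h'
        exact bisim_trans d c L (hb y) h'
  · -- (2)
    intro v u w hst
    simp only
    rw [repF_eq d c L G ((sameType_iff d c L G v u).mp hst)]
  · -- (3)
    intro v w w' hE hst hlt
    have hb : bisim d c L G G w' w := (sameType_iff d c L G w' w).mp hst
    rw [capF_eq d c L G _ hb]
    omega
  · -- (4)
    intro v w w' hE hcle hst
    have hb : bisim d c L G G w' w := (sameType_iff d c L G w' w).mp hst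
    rw [capF_eq d c L G _ hb]
    by_cases hdc : degF d c L G (repF d c L G v) w < c
    · rw [capF_of_lt hdc] at hE
      omega
    · rw [capF_of_ge hdc]
      calc n w' ≤ (clsS d c L G w').ncard := (n_self_le d c L G n hn w').2
        _ = (clsS d c L G w).ncard := by rw [clsS_eq d c L G hb]
/-- Every featured graph `G` with an enumeration `n` admits a
graph `Ĝ` over the same vertices and features that is `∼^{L,c,*}_∃`-bisimilar to
`G` at every vertex (1), in which vertices of the same `∼^{L,c}`-type have the
same out-neighbours (2), and whose out-edges are downward closed along the
enumeration within each type (3) and saturate a whole type class as soon as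
they reach multiplicity `c` (4). -/
theorem stmt11 (d c L : ℕ) (hc : 1 ≤ c) (G : FGraph d) (n : G.V → ℕ)
    (hn : IsEnum d c L G n) :
    ∃ E' : G.V → G.V → Prop,
      (∀ v : G.V, bisimStar d c L G { G with E := E' } v v) ∧
      (∀ v u w : G.V, sameType d c L G v u → (E' v w ↔ E' u w)) ∧
      (∀ v w w' : G.V, E' v w → sameType d c L G w' w → n w' < n w → E' v w') ∧
      (∀ v w w' : G.V, E' v w → c ≤ n w → sameType d c L G w' w → E' v w') := by
  exact stmt11' d c L hc G n hn
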